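/- arXiv:1705.01913 — 6 statements merged into one kernel-verified Lean document; each statement's English description precedes it below -/
import Mathlib

section
/- Let α > 0, U : H → H be a linear continuous self-adjoint operator with ⟨x, Ux⟩ ≥ α‖x‖² for all x, and A : H ⇒ H maximally monotone. Then for every x ∈ H there exists a unique p ∈ H with x ∈ Up + Ap, i.e., the operator (U + A)⁻¹ : H → H is single-valued with full domain. -/
open RealInnerProductSpace

def MonotoneOp {H : Type*} [NormedAddCommGroup H] [InnerProductSpace ℝ H]
    (A : H → Set H) : Prop :=
  ∀ x y u v, u ∈ A x → v ∈ A y → 0 ≤ ⟪x - y, u - v⟫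

def MaximalMonotoneOp {H : Type*} [NormedAddCommGroup H] [InnerProductSpace ℝ H]
    (A : H → Set H) : Prop :=
  MonotoneOp A ∧ ∀ x u, (∀ y v, v ∈ A y → 0 ≤ ⟪x - y, u - v⟫) → u ∈ A x

open Filter Topology

noncomputable def phiAux {H : Type*} [NormedAddCommGroup H] [InnerProductSpace ℝ H]
    (U : H →L[ℝ] H) (x z w a b : H) : ℝ :=
  ⟪z - a, b - x⟫ + ⟪a, U w⟫ + ⟪z, U z⟫ / 2 + ⟪w, U w⟫ / 2

lemma phiAux_eq {H : Type*} [NormedAddCommGroup H] [InnerProductSpace ℝ H]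
    (U : H →L[ℝ] H) (hs : ∀ u v : H, ⟪u, U v⟫ = ⟪v, U u⟫) (x z w a b : H) :
    phiAux U x z w a b = ⟪z + w, U (z + w)⟫ / 2 - ⟪z - a, (U w + x) - b⟫ := by
  unfold phiAux
  simp only [inner_add_left, inner_add_right, inner_sub_left, inner_sub_right, map_add, map_sub]
  linarith [hs z w]

lemma phiAux_convex {H : Type*} [NormedAddCommGroup H] [InnerProductSpace ℝ H]
    (U : H →L[ℝ] H) (x : H) (t : ℝ) (z₁ w₁ z₂ w₂ a b : H) :
    phiAux U x ((1-t)•z₁ + t•z₂) ((1-t)•w₁ + t•w₂) a b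
      = (1-t) * phiAux U x z₁ w₁ a b + t * phiAux U x z₂ w₂ a b
        - t*(1-t)*(⟪z₁ - z₂, U (z₁ - z₂)⟫ + ⟪w₁ - w₂, U (w₁ - w₂)⟫)/2 := by
  unfold phiAux
  simp only [inner_add_left, inner_add_right, inner_sub_left, inner_sub_right, map_add, map_sub,
    map_smul, real_inner_smul_left, real_inner_smul_right]
  ring

lemma phiAux_T {H : Type*} [NormedAddCommGroup H] [InnerProductSpace ℝ H]
    (U : H →L[ℝ] H) (hs : ∀ u v : H, ⟪u, U v⟫ = ⟪v, U u⟫) (z w a c : H) :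
    ⟪w + a, U (z + c)⟫
      = ⟪a + c, U (a + c)⟫/2 - ⟪z - a, U (z - a)⟫/2 - ⟪w - c, U (w - c)⟫/2
        - ⟪z + w, U (z + w)⟫/2 + ⟪z + w, U (z + w)⟫ := by
  simp only [inner_add_left, inner_add_right, inner_sub_left, inner_sub_right, map_add, map_sub]
  linarith [hs z w, hs z a, hs z c, hs w a, hs w c, hs a c]

/-- For `U` linear continuous self-adjoint strongly positive and `A` maximally
monotone, `(U + A)⁻¹` is single-valued with full domain: for every `x` there is
a unique `p` with `x ∈ Up + Ap`. -/
theorem U_plus_A_inverse_single_valued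
    {H : Type*} [NormedAddCommGroup H] [InnerProductSpace ℝ H] [CompleteSpace H]
    (α : ℝ) (hα : 0 < α) (U : H →L[ℝ] H)
    (hU_selfadj : ∀ x y : H, ⟪U x, y⟫ = ⟪x, U y⟫)
    (hU_coercive : ∀ x : H, α * ‖x‖ ^ 2 ≤ ⟪x, U x⟫)
    (A : H → Set H) (hA : MaximalMonotoneOp A) :
    ∀ x : H, ∃! p : H, x - U p ∈ A p := by
  -- symmetry of the bilinear form ⟪·, U ·⟫
  have hs : ∀ u v : H, ⟪u, U v⟫ = ⟪v, U u⟫ := fun u v => by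
    rw [← hU_selfadj]; exact real_inner_comm _ _
  -- positivity
  have hpos : ∀ u : H, (0:ℝ) ≤ ⟪u, U u⟫ := fun u =>
    le_trans (by positivity) (hU_coercive u)
  have hzero : ∀ u : H, ⟪u, U u⟫ ≤ 0 → u = 0 := by
    intro u hu
    have h1 := hU_coercive u
    have : ‖u‖ ^ 2 ≤ 0 := by nlinarith
    have : ‖u‖ = 0 := by nlinarith [sq_nonneg ‖u‖, norm_nonneg u]
    simpa using this
  -- U is surjective (Lax–Milgram)
  have hUsurj : Function.Surjective U := by
    set B : H →L[ℝ] H →L[ℝ] ℝ := (innerSL ℝ).comp U with hB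
    have hco : IsCoercive B := by
      refine ⟨α, hα, fun u => ?_⟩
      have := hU_coercive u
      rw [real_inner_comm] at this
      simpa [hB, mul_assoc, pow_two] using this.trans_eq rfl
    intro y
    refine ⟨hco.continuousLinearEquivOfBilin.symm y, ?_⟩
    have h2 : ∀ v, hco.continuousLinearEquivOfBilin v = U v := fun v =>
      ext_inner_right ℝ (fun w => hco.continuousLinearEquivOfBilin_apply v w)
    rw [← h2]; simp
  intro x
  -- the graph of A is nonempty
  obtain ⟨a₀, b₀, hb₀⟩ : ∃ a b, b ∈ A a := by
    by_contra h
    push_neg at h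
    exact h 0 0 (hA.2 0 0 (fun y v hv => absurd hv (h y v)))
  obtain ⟨c₀, hc₀⟩ := hUsurj (b₀ - x)
  classical
  set D : Set ℝ := {r | ∃ z w, ∀ a b, b ∈ A a → phiAux U x z w a b ≤ r} with hD
  -- graph monotone comparison
  have hgraph_le : ∀ a b c a' b', b ∈ A a → b' ∈ A a' → U c = b - x →
      phiAux U x a c a' b' ≤ phiAux U x a c a b := by
    intro a b c a' b' hb hb' hc
    have hmono : 0 ≤ ⟪a - a', b - b'⟫ := hA.1 a a' b b' hb hb'
    rw [phiAux_eq U hs, phiAux_eq U hs]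
    have e1 : (U c + x) - b = 0 := by rw [hc]; abel
    have e2 : (U c + x) - b' = b - b' := by rw [hc]; abel
    rw [e1, e2]
    simp only [inner_zero_right, sub_zero]
    linarith
  have hself : ∀ a b c, U c = b - x → phiAux U x a c a b = ⟪a + c, U (a + c)⟫ / 2 := by
    intro a b c hc
    rw [phiAux_eq U hs]
    have e1 : (U c + x) - b = 0 := by rw [hc]; abel
    rw [e1]
    simp
  -- lower bound for elements of D
  have hDlow : ∀ z w r, (∀ a b, b ∈ A a → phiAux U x z w a b ≤ r) →
      ⟪z + w, U (z + w)⟫ / 2 ≤ r := by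
    intro z w r hr
    by_cases hc : ∀ a b, b ∈ A a → 0 ≤ ⟪z - a, (U w + x) - b⟫
    · have hmem : U w + x ∈ A z := hA.2 z (U w + x) (fun y v hv => hc y v hv)
      have := hr z (U w + x) hmem
      rw [phiAux_eq U hs] at this
      simp only [sub_self, inner_zero_left, sub_zero] at this
      exact this
    · push_neg at hc
      obtain ⟨a, b, hb, hlt⟩ := hc
      have := hr a b hb
      rw [phiAux_eq U hs] at this
      linarith
  have hD0 : ∀ r ∈ D, (0:ℝ) ≤ r := by
    rintro r ⟨z, w, hzw⟩
    exact le_trans (by linarith [hpos (z + w)]) (hDlow z w r hzw)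
  have hr₀D : phiAux U x a₀ c₀ a₀ b₀ ∈ D :=
    ⟨a₀, c₀, fun a b hb => hgraph_le a₀ b₀ c₀ a b hb₀ hb hc₀⟩
  have hDne : D.Nonempty := ⟨_, hr₀D⟩
  have hDbdd : BddBelow D := ⟨0, fun r hr => hD0 r hr⟩
  set m := sInf D with hm
  -- minimizing sequence
  have hseq : ∀ n : ℕ, ∃ z w, ∀ a b, b ∈ A a → phiAux U x z w a b ≤ m + 1/(n+1) := by
    intro n
    have hlt : m < m + 1/(n+1) := by
      have : (0:ℝ) < 1/(n+1) := by positivity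
      linarith
    obtain ⟨r, hrD, hrlt⟩ := exists_lt_of_csInf_lt hDne hlt
    obtain ⟨z, w, hzw⟩ := hrD
    exact ⟨z, w, fun a b hb => (hzw a b hb).trans hrlt.le⟩
  choose z w hzw using hseq
  -- the parallelogram estimate
  have hkey : ∀ n k : ℕ,
      ⟪z n - z k, U (z n - z k)⟫ + ⟪w n - w k, U (w n - w k)⟫
        ≤ 4 * (1/(n+1) + 1/(k+1)) := by
    intro n k
    set Q := ⟪z n - z k, U (z n - z k)⟫ + ⟪w n - w k, U (w n - w k)⟫ with hQ
    have hmid : ∀ a b, b ∈ A a →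
        phiAux U x ((1-(1/2:ℝ))•(z n) + (1/2:ℝ)•(z k))
          ((1-(1/2:ℝ))•(w n) + (1/2:ℝ)•(w k)) a b
          ≤ (1/2)*(m + 1/(n+1)) + (1/2)*(m + 1/(k+1)) - Q/8 := by
      intro a b hb
      rw [phiAux_convex]
      have h1 := hzw n a b hb
      have h2 := hzw k a b hb
      rw [← hQ]
      linarith
    have hmem : (1/2)*(m + 1/(n+1)) + (1/2)*(m + 1/(k+1)) - Q/8 ∈ D := ⟨_, _, hmid⟩
    have := csInf_le hDbdd hmem
    rw [← hm] at this
    linarith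
  -- Cauchy sequences
  have h2 : Tendsto (fun N : ℕ => α*((N:ℝ)+1)) atTop atTop :=
    Tendsto.const_mul_atTop hα
      (tendsto_atTop_add_const_right _ 1 tendsto_natCast_atTop_atTop)
  have h1 : Tendsto (fun N : ℕ => 8/(α*((N:ℝ)+1))) atTop (𝓝 0) := by
    have h3 := h2.inv_tendsto_atTop.const_mul (8:ℝ)
    simpa [div_eq_mul_inv, Pi.inv_def] using h3
  have hb0 : Tendsto (fun N : ℕ => Real.sqrt (8/(α*(N+1)))) atTop (𝓝 0) := by
    exact (Real.continuous_sqrt.tendsto' 0 0 Real.sqrt_zero).comp h1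
  have hdist : ∀ (s : ℕ → H), (∀ n k : ℕ, α * ‖s n - s k‖^2 ≤ 4 * (1/(n+1) + 1/(k+1))) →
      CauchySeq s := by
    intro s hsb
    apply cauchySeq_of_le_tendsto_0 (fun N : ℕ => Real.sqrt (8/(α*(N+1)))) _ hb0
    intro n k N hn hk
    rw [dist_eq_norm]
    have h1 : α * ‖s n - s k‖^2 ≤ 8/(N+1) := by
      have hnN : ((N:ℝ)) ≤ (n:ℝ) := Nat.cast_le.mpr hn
      have hkN : ((N:ℝ)) ≤ (k:ℝ) := Nat.cast_le.mpr hk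
      have e1 : (1:ℝ)/(n+1) ≤ 1/(N+1) := by
        apply one_div_le_one_div_of_le (by positivity)
        linarith
      have e2 : (1:ℝ)/(k+1) ≤ 1/(N+1) := by
        apply one_div_le_one_div_of_le (by positivity)
        linarith
      have e3 : (8:ℝ)/(N+1) = 4 * (1/(N+1) + 1/(N+1)) := by ring
      calc α * ‖s n - s k‖^2 ≤ 4 * (1/(n+1) + 1/(k+1)) := hsb n k
        _ ≤ 8/(N+1) := by rw [e3]; linarith
    have h2 : ‖s n - s k‖^2 ≤ 8/(α*(N+1)) := by
      have hN : (0:ℝ) < (N:ℝ)+1 := by positivity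
      rw [le_div_iff₀ (by positivity : (0:ℝ) < α*((N:ℝ)+1))]
      have h3 := mul_le_mul_of_nonneg_right h1 hN.le
      rw [div_mul_cancel₀ _ hN.ne'] at h3
      nlinarith
    have := Real.sqrt_le_sqrt h2
    rwa [Real.sqrt_sq (norm_nonneg _)] at this
  have hzC : CauchySeq z := by
    apply hdist
    intro n k
    calc α * ‖z n - z k‖^2 ≤ ⟪z n - z k, U (z n - z k)⟫ := hU_coercive _
      _ ≤ 4 * (1/(n+1) + 1/(k+1)) := by linarith [hkey n k, hpos (w n - w k)]
  have hwC : CauchySeq w := by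
    apply hdist
    intro n k
    calc α * ‖w n - w k‖^2 ≤ ⟪w n - w k, U (w n - w k)⟫ := hU_coercive _
      _ ≤ 4 * (1/(n+1) + 1/(k+1)) := by linarith [hkey n k, hpos (z n - z k)]
  obtain ⟨zb, hzb⟩ := cauchySeq_tendsto_of_complete hzC
  obtain ⟨wb, hwb⟩ := cauchySeq_tendsto_of_complete hwC
  -- the limit is a minimizer
  have hlim : ∀ a b, b ∈ A a → phiAux U x zb wb a b ≤ m := by
    intro a b hb
    have hcont : Tendsto (fun n => phiAux U x (z n) (w n) a b) atTop
        (𝓝 (phiAux U x zb wb a b)) := by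
      unfold phiAux
      exact ((((hzb.sub tendsto_const_nhds).inner tendsto_const_nhds).add
        (Tendsto.inner tendsto_const_nhds ((U.continuous.tendsto _).comp hwb))).add
        ((hzb.inner ((U.continuous.tendsto _).comp hzb)).div_const 2)).add
        ((hwb.inner ((U.continuous.tendsto _).comp hwb)).div_const 2)
    have hmt : Tendsto (fun n : ℕ => m + 1/(n+1 : ℝ)) atTop (𝓝 m) := by
      have h8 : Tendsto (fun n : ℕ => m + 1/(n+1:ℝ)) atTop (𝓝 (m + 0)) :=
        Tendsto.add tendsto_const_nhds tendsto_one_div_add_atTop_nhds_zero_nat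
      simpa using h8
    exact le_of_tendsto_of_tendsto' hcont hmt (fun n => hzw n a b hb)
  have hmD : m ∈ D := ⟨zb, wb, hlim⟩
  have hmQ : ⟪zb + wb, U (zb + wb)⟫ / 2 ≤ m := hDlow zb wb m hlim
  -- the key variational inequality
  have hstar : ∀ a b c, b ∈ A a → U c = b - x →
      m + (⟪zb - a, U (zb - a)⟫ + ⟪wb - c, U (wb - c)⟫)/2 ≤ ⟪a + c, U (a + c)⟫/2 := by
    intro a b c hb hc
    set Q := ⟪zb - a, U (zb - a)⟫ + ⟪wb - c, U (wb - c)⟫ with hQ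
    set R := ⟪a + c, U (a + c)⟫/2 with hR
    have hforall : ∀ t : ℝ, 0 < t → t ≤ 1 → m + (1-t)*Q/2 ≤ R := by
      intro t ht0 ht1
      have hpt : ∀ a' b', b' ∈ A a' →
          phiAux U x ((1-t)•zb + t•a) ((1-t)•wb + t•c) a' b'
            ≤ (1-t)*m + t*R - t*(1-t)*Q/2 := by
        intro a' b' hb'
        rw [phiAux_convex]
        have h1 := hlim a' b' hb'
        have h2 : phiAux U x a c a' b' ≤ phiAux U x a c a b :=
          hgraph_le a b c a' b' hb hb' hc
        have h3 : phiAux U x a c a b = R := by rw [hR]; exact hself a b c hc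
        rw [← hQ]
        nlinarith [mul_le_mul_of_nonneg_left h1 (by linarith : (0:ℝ) ≤ 1-t),
          mul_le_mul_of_nonneg_left (h2.trans_eq h3) ht0.le]
      have hmem : (1-t)*m + t*R - t*(1-t)*Q/2 ∈ D := ⟨_, _, hpt⟩
      have h4 := csInf_le hDbdd hmem
      rw [← hm] at h4
      have h5 : t*(m + (1-t)*Q/2) ≤ t*R := by nlinarith
      have := le_of_mul_le_mul_left (by linarith : t*(m + (1-t)*Q/2) ≤ t*R) ht0
      linarith
    have hT : Tendsto (fun n : ℕ => m + (1-1/(n+1 : ℝ))*Q/2) atTop (𝓝 (m + Q/2)) := by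
      have h6 : Tendsto (fun n : ℕ => m + (1-1/(n+1:ℝ))*Q/2) atTop (𝓝 (m + (1-0)*Q/2)) :=
        Tendsto.add tendsto_const_nhds
          (((tendsto_const_nhds.sub tendsto_one_div_add_atTop_nhds_zero_nat).mul_const Q).div_const 2)
      simpa using h6
    apply le_of_tendsto' hT
    intro n
    apply hforall (1/(n+1:ℝ)) (by positivity)
    rw [div_le_one (by positivity)]
    linarith [Nat.cast_nonneg (α := ℝ) n]
  -- (x - U zb) is in A (-wb)
  have hmem : x - U zb ∈ A (-wb) := by
    apply hA.2
    intro y v hv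
    obtain ⟨c, hc⟩ := hUsurj (v - x)
    have hst := hstar y v c hv hc
    have hTid := phiAux_T U hs zb wb y c
    have hrw : ⟪-wb - y, (x - U zb) - v⟫ = ⟪wb + y, U (zb + c)⟫ := by
      have e1 : (x - U zb) - v = -(U (zb + c)) := by
        rw [map_add, hc]; abel
      rw [e1]
      have e2 : (-wb - y : H) = -(wb + y) := by abel
      rw [e2, inner_neg_neg]
    rw [hrw, hTid]
    linarith [hpos (zb + wb)]
  -- conclude zb + wb = 0
  have hc2 : U (-zb) = (x - U zb) - x := by rw [map_neg]; abel
  have hst2 := hstar (-wb) (x - U zb) (-zb) hmem hc2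
  have e3 : ((-wb) + (-zb) : H) = -(zb + wb) := by abel
  have e4 : (zb - -wb : H) = zb + wb := by abel
  have e5 : (wb - -zb : H) = zb + wb := by abel
  rw [e3, e4, e5, map_neg, inner_neg_neg] at hst2
  have hs0 : zb + wb = 0 := by
    apply hzero
    have := hpos (zb + wb)
    linarith
  have hwz : -wb = zb := by
    have h7 : zb = -wb := add_eq_zero_iff_eq_neg.mp hs0
    rw [h7]
  rw [hwz] at hmem
  -- existence and uniqueness
  refine ⟨zb, hmem, ?_⟩
  intro q hq
  have hmono := hA.1 q zb (x - U q) (x - U zb) hq hmem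
  have e6 : (x - U q) - (x - U zb) = U (zb - q) := by rw [map_sub]; abel
  rw [e6] at hmono
  have e7 : ⟪q - zb, U (zb - q)⟫ = -⟪q - zb, U (q - zb)⟫ := by
    have : (zb - q : H) = -(q - zb) := by abel
    rw [this, map_neg, inner_neg_right]
  rw [e7] at hmono
  have := hzero (q - zb) (by linarith)
  have : q - zb = 0 := this
  have : q = zb := by rwa [sub_eq_zero] at this
  exact this
end

section
/- Let λ > 0, γ > 0, μ ≥ 0, and define the sequence (τ_n)_{n≥1} by τ₁ > 0 with μτ₁ < 2γ and τ_{n+1} = τ_n / √(1 + (τ_n/λ)(2γ − μτ_n)) for n ≥ 1. Then (τ_n) is strictly decreasing, positive, and lim_{n→∞} n·τ_n = λ/γ. -/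
open Filter Topology

set_option maxHeartbeats 1000000 in
/-- The step-size recursion `τ_{n+1} = τ_n / √(1 + (τ_n/λ)(2γ − μτ_n))` with
`μτ₁ < 2γ` produces a positive strictly decreasing sequence with
`lim n·τ_n = λ/γ`. -/
theorem stepsize_asymptotics
    (lam γ μ : ℝ) (hlam : 0 < lam) (hγ : 0 < γ) (hμ : 0 ≤ μ)
    (τ : ℕ → ℝ) (hτ1 : 0 < τ 1) (hμτ1 : μ * τ 1 < 2 * γ)
    (hrec : ∀ n ≥ 1, τ (n + 1) =
      τ n / Real.sqrt (1 + (τ n / lam) * (2 * γ - μ * τ n))) :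
    (∀ n ≥ 1, 0 < τ n) ∧ (∀ n ≥ 1, τ (n + 1) < τ n) ∧
    Tendsto (fun n : ℕ => (n : ℝ) * τ n) atTop (𝓝 (lam / γ)) := by
  set A : ℕ → ℝ := fun n => 1 + (τ n / lam) * (2 * γ - μ * τ n) with hA_def
  -- positivity and boundedness
  have key : ∀ n, 1 ≤ n → 0 < τ n ∧ τ n ≤ τ 1 := by
    intro n hn
    induction n with
    | zero => omega
    | succ m ih =>
      rcases Nat.lt_or_ge m 1 with hm | hm
      · interval_cases m
        exact ⟨hτ1, le_refl _⟩
      · obtain ⟨hp, hb⟩ := ih hm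
        have hA1 : 1 < A m := by
          have h1 : 0 < 2 * γ - μ * τ m := by nlinarith
          have : 0 < (τ m / lam) * (2 * γ - μ * τ m) := by positivity
          simp only [hA_def]; linarith
        have hs1 : 1 < Real.sqrt (A m) := by
          calc (1:ℝ) = Real.sqrt 1 := by simp
          _ < Real.sqrt (A m) := Real.sqrt_lt_sqrt zero_le_one hA1
        rw [hrec m hm]
        have hsp : (0:ℝ) < Real.sqrt (A m) := lt_trans one_pos hs1
        constructor
        · exact div_pos hp hsp
        · exact le_trans (le_of_lt (div_lt_self hp hs1)) hb
  have hpos : ∀ n ≥ 1, 0 < τ n := fun n hn => (key n hn).1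
  have hAgt : ∀ n ≥ 1, 1 < A n := by
    intro n hn
    obtain ⟨hp, hb⟩ := key n hn
    have h1 : 0 < 2 * γ - μ * τ n := by nlinarith
    have : 0 < (τ n / lam) * (2 * γ - μ * τ n) := by positivity
    simp only [hA_def]; linarith
  have hdec : ∀ n ≥ 1, τ (n + 1) < τ n := by
    intro n hn
    have hs1 : 1 < Real.sqrt (A n) := by
      calc (1:ℝ) = Real.sqrt 1 := by simp
      _ < Real.sqrt (A n) := Real.sqrt_lt_sqrt zero_le_one (hAgt n hn)
    rw [hrec n hn]
    exact div_lt_self (hpos n hn) hs1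
  refine ⟨hpos, hdec, ?_⟩
  -- the inverse sequence
  set s : ℕ → ℝ := fun n => (τ n)⁻¹ with hs_def
  have hs_pos : ∀ n ≥ 1, 0 < s n := fun n hn => inv_pos.2 (hpos n hn)
  -- key recursion for s² : s(n+1)² = s n² + (2γ/λ) s n − μ/λ
  have hsq : ∀ n ≥ 1, s (n + 1) ^ 2 = s n ^ 2 + (2 * γ / lam) * s n - μ / lam := by
    intro n hn
    have hA0 : (0:ℝ) < A n := lt_trans one_pos (hAgt n hn)
    have hτn := hpos n hn
    have h2 : τ (n + 1) ^ 2 = τ n ^ 2 / A n := by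
      rw [hrec n hn, div_pow, Real.sq_sqrt hA0.le]
    have hτn1 : (0:ℝ) < τ (n+1) := hpos (n+1) (by omega)
    simp only [hs_def]
    rw [← one_div, ← one_div, div_pow, div_pow, h2, one_pow]
    rw [div_div_eq_mul_div, one_mul]
    simp only [hA_def]
    field_simp
    ring
  -- s is strictly increasing and bounded below by s 1
  have hs_mono : ∀ n ≥ 1, s n < s (n + 1) := by
    intro n hn
    exact (inv_lt_inv₀ (hpos n hn) (hpos (n+1) (by omega))).2 (hdec n hn)
  have hs_lb : ∀ n ≥ 1, s 1 ≤ s n := by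
    intro n hn
    exact (inv_le_inv₀ hτ1 (hpos n hn)).2 (key n hn).2
  -- growth of s²
  set c : ℝ := (2 * γ * s 1 - μ) / lam with hc_def
  have hc_pos : 0 < c := by
    have h2 : μ < 2 * γ / τ 1 := (lt_div_iff₀ hτ1).2 hμτ1
    have h3 : 2 * γ * s 1 = 2 * γ / τ 1 := by
      simp [hs_def, div_eq_mul_inv]
    apply div_pos _ hlam
    rw [h3]
    linarith
  have hgrow : ∀ n : ℕ, s 1 ^ 2 + n * c ≤ s (n + 1) ^ 2 := by
    intro n
    induction n with
    | zero => simp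
    | succ m ih =>
      have h1 := hsq (m + 1) (by omega)
      have h2 : c ≤ (2 * γ / lam) * s (m + 1) - μ / lam := by
        have hle := hs_lb (m + 1) (by omega)
        have e : (2 * γ / lam) * s (m + 1) - μ / lam = (2 * γ * s (m + 1) - μ) / lam := by
          field_simp
        rw [hc_def, e]
        apply div_le_div_of_nonneg_right ?_ hlam.le
        nlinarith
      push_cast
      nlinarith
  -- s tends to infinity
  have hs_sq_top : Tendsto (fun n : ℕ => s (n + 1) ^ 2) atTop atTop := by
    apply tendsto_atTop_mono hgrow
    apply tendsto_atTop_add_const_left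
    exact (tendsto_natCast_atTop_atTop).atTop_mul_const hc_pos
  have hs_top' : Tendsto (fun n : ℕ => s (n + 1)) atTop atTop := by
    rw [tendsto_atTop]
    intro b
    filter_upwards [hs_sq_top.eventually_ge_atTop (b ^ 2)] with n hn
    have hsn : 0 ≤ s (n + 1) := (hs_pos (n + 1) (by omega)).le
    nlinarith [sq_nonneg (s (n + 1) - b), sq_nonneg (s (n + 1) + b)]
  have hs_top : Tendsto s atTop atTop := by
    rw [← tendsto_add_atTop_iff_nat 1]
    exact hs_top'
  have hs_inv : Tendsto (fun n => (s n)⁻¹) atTop (𝓝 0) :=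
    tendsto_inv_atTop_zero.comp hs_top
  -- the ratio r n = s(n+1)/s n tends to 1
  set r : ℕ → ℝ := fun n => s (n + 1) / s n with hr_def
  have hr_eq : ∀ n ≥ 1, r n = Real.sqrt (1 + (2 * γ / lam) * (s n)⁻¹ - (μ / lam) * ((s n)⁻¹) ^ 2) := by
    intro n hn
    have hsn := hs_pos n hn
    have hsn1 := hs_pos (n + 1) (by omega)
    have hsne : s n ≠ 0 := hsn.ne'
    have hlne : lam ≠ 0 := hlam.ne'
    have harg : 1 + (2 * γ / lam) * (s n)⁻¹ - (μ / lam) * ((s n)⁻¹) ^ 2 = (r n) ^ 2 := by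
      show _ = (s (n+1) / s n) ^ 2
      rw [div_pow, hsq n hn]
      field_simp
    rw [harg, Real.sqrt_sq (by positivity)]
  have hr_lim : Tendsto r atTop (𝓝 1) := by
    have hinner : Tendsto (fun n => 1 + (2 * γ / lam) * (s n)⁻¹ - (μ / lam) * ((s n)⁻¹) ^ 2)
        atTop (𝓝 1) := by
      have h1 : Tendsto (fun n => (2 * γ / lam) * (s n)⁻¹) atTop (𝓝 0) := by
        simpa using hs_inv.const_mul (2 * γ / lam)
      have h2 : Tendsto (fun n => (μ / lam) * ((s n)⁻¹) ^ 2) atTop (𝓝 0) := by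
        have := (hs_inv.pow 2).const_mul (μ / lam)
        simpa using this
      have := ((tendsto_const_nhds (x := (1:ℝ)) (f := atTop) (α := ℕ)).add h1).sub h2
      simpa using this
    have hsqrt : Tendsto (fun n => Real.sqrt (1 + (2 * γ / lam) * (s n)⁻¹ - (μ / lam) * ((s n)⁻¹) ^ 2))
        atTop (𝓝 1) := by
      have := (Real.continuous_sqrt.continuousAt (x := (1:ℝ))).tendsto.comp hinner
      simpa [Function.comp_def] using this
    apply hsqrt.congr'
    filter_upwards [eventually_ge_atTop 1] with n hn
    exact (hr_eq n hn).symm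
  -- the differences tend to γ/λ
  have hd_lim : Tendsto (fun n => s (n + 1) - s n) atTop (𝓝 (γ / lam)) := by
    have hnum : Tendsto (fun n => 2 * γ / lam - (μ / lam) * (s n)⁻¹) atTop (𝓝 (2 * γ / lam)) := by
      have h := Tendsto.sub (tendsto_const_nhds (x := 2 * γ / lam) (f := atTop) (α := ℕ))
        (hs_inv.const_mul (μ / lam))
      simpa using h
    have hden : Tendsto (fun n => r n + 1) atTop (𝓝 2) := by
      have h := hr_lim.add (tendsto_const_nhds (x := (1:ℝ)) (f := atTop) (α := ℕ))
      norm_num at h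
      exact h
    have hquot := hnum.div hden (by norm_num)
    have hval : 2 * γ / lam / 2 = γ / lam := by ring
    rw [hval] at hquot
    apply hquot.congr'
    filter_upwards [eventually_ge_atTop 1] with n hn
    simp only [Pi.div_apply]
    have hsn := hs_pos n hn
    have hsn1 := hs_pos (n + 1) (by omega)
    have hrpos : 0 < r n + 1 := by
      have : 0 < r n := div_pos hsn1 hsn
      linarith
    rw [div_eq_iff hrpos.ne']
    have key2 : s (n+1) ^ 2 - s n ^ 2 = (2 * γ / lam) * s n - μ / lam := by
      linarith [hsq n hn]
    have expand : (s (n+1) - s n) * (r n + 1) = (s (n+1) ^ 2 - s n ^ 2) / s n := by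
      show (s (n+1) - s n) * (s (n+1) / s n + 1) = _
      field_simp
      ring
    rw [expand, key2]
    field_simp
  -- Cesàro
  have hchain : Tendsto (fun n : ℕ => (n : ℝ)⁻¹ * (s (n + 1) - s 1)) atTop (𝓝 (γ / lam)) := by
    have hshift : Tendsto (fun k : ℕ => s (k + 2) - s (k + 1)) atTop (𝓝 (γ / lam)) := by
      rw [← tendsto_add_atTop_iff_nat 1] at hd_lim
      exact hd_lim
    have := hshift.cesaro
    apply this.congr
    intro n
    congr 1
    exact Finset.sum_range_sub (fun k => s (k + 1)) n
  have hsn_div : Tendsto (fun n : ℕ => (n : ℝ)⁻¹ * s (n + 1)) atTop (𝓝 (γ / lam)) := by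
    have h0 : Tendsto (fun n : ℕ => (n : ℝ)⁻¹ * s 1) atTop (𝓝 0) := by
      simpa using (tendsto_inv_atTop_zero.comp tendsto_natCast_atTop_atTop).mul_const (s 1)
    have := hchain.add h0
    simp only [add_zero] at this
    apply this.congr
    intro n
    ring
  -- shift to get s n / n
  have hg : Tendsto (fun n : ℕ => (n : ℝ)⁻¹ * s n) atTop (𝓝 (γ / lam)) := by
    rw [← tendsto_add_atTop_iff_nat 1]
    have hratio : Tendsto (fun n : ℕ => (n : ℝ) / ((n : ℝ) + 1)) atTop (𝓝 1) :=
      tendsto_natCast_div_add_atTop (1 : ℝ)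
    have := hsn_div.mul hratio
    rw [mul_one] at this
    apply this.congr'
    filter_upwards [eventually_ge_atTop 1] with n hn
    have hn0 : (n : ℝ) ≠ 0 := Nat.cast_ne_zero.2 (by omega)
    have hn1 : ((n : ℝ) + 1) ≠ 0 := by positivity
    push_cast
    field_simp
    try ring
  -- conclude
  have hgl : (γ / lam) ≠ 0 := by positivity
  have hfin := hg.inv₀ hgl
  rw [inv_div] at hfin
  apply hfin.congr'
  filter_upwards [eventually_ge_atTop 1] with n hn
  have hsn := hs_pos n hn
  have hn0 : (n : ℝ) ≠ 0 := Nat.cast_ne_zero.2 (by omega)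
  rw [mul_inv, inv_inv, hs_def]
  simp
end

section
/- Let λ > 0, γ > 0, μ ≥ 0, τ₁ > 0 with μτ₁ < γ, and define τ_{k+1} = τ_k/√(1 + (τ_k/λ)(2γ − μτ_k)) and θ_k = 1/√(1 + (τ_{k+1}/λ)(2γ − μτ_{k+1})) for k ≥ 1. Then μτ_k < γ for all k ≥ 1 and the sequence (θ_k) is monotonically increasing. -/
/-- Under the strengthened assumption `μτ₁ < γ`, the recursion
`τ_{k+1} = τ_k/√(1 + (τ_k/λ)(2γ − μτ_k))`, `θ_k = 1/√(1 + (τ_{k+1}/λ)(2γ − μτ_{k+1}))`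
keeps `μτ_k < γ` and makes `(θ_k)` monotonically increasing. -/
theorem theta_monotone
    (lam γ μ : ℝ) (hlam : 0 < lam) (hγ : 0 < γ) (hμ : 0 ≤ μ)
    (τ θ : ℕ → ℝ) (hτ1 : 0 < τ 1) (hμτ1 : μ * τ 1 < γ)
    (hrec : ∀ k ≥ 1, τ (k + 1) =
      τ k / Real.sqrt (1 + (τ k / lam) * (2 * γ - μ * τ k)))
    (hθ : ∀ k ≥ 1, θ k =
      1 / Real.sqrt (1 + (τ (k + 1) / lam) * (2 * γ - μ * τ (k + 1)))) :
    (∀ k ≥ 1, μ * τ k < γ) ∧ (∀ k ≥ 1, θ k ≤ θ (k + 1)) := by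
  have key : ∀ k ≥ 1, 0 < τ k ∧ μ * τ k < γ ∧ τ (k + 1) ≤ τ k := by
    intro k hk
    induction k, hk using Nat.le_induction with
    | base =>
      refine ⟨hτ1, hμτ1, ?_⟩
      rw [hrec 1 le_rfl]
      have harg : 1 ≤ 1 + (τ 1 / lam) * (2 * γ - μ * τ 1) := by
        nlinarith [div_pos hτ1 hlam]
      have hs : 1 ≤ Real.sqrt (1 + (τ 1 / lam) * (2 * γ - μ * τ 1)) := by
        simpa using Real.sqrt_le_sqrt harg
      exact div_le_self hτ1.le hs
    | succ k hk ih =>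
      obtain ⟨hpos, hlt, hle⟩ := ih
      have harg : 1 ≤ 1 + (τ k / lam) * (2 * γ - μ * τ k) := by
        nlinarith [div_pos hpos hlam]
      have hs1 : 1 ≤ Real.sqrt (1 + (τ k / lam) * (2 * γ - μ * τ k)) := by
        simpa using Real.sqrt_le_sqrt harg
      have hpos' : 0 < τ (k + 1) := by
        rw [hrec k hk]; exact div_pos hpos (lt_of_lt_of_le one_pos hs1)
      have hlt' : μ * τ (k + 1) < γ :=
        lt_of_le_of_lt (by nlinarith) hlt
      refine ⟨hpos', hlt', ?_⟩
      rw [hrec (k + 1) (by omega)]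
      have harg' : 1 ≤ 1 + (τ (k + 1) / lam) * (2 * γ - μ * τ (k + 1)) := by
        nlinarith [div_pos hpos' hlam]
      have hs1' : 1 ≤ Real.sqrt (1 + (τ (k + 1) / lam) * (2 * γ - μ * τ (k + 1))) := by
        simpa using Real.sqrt_le_sqrt harg'
      exact div_le_self hpos'.le hs1'
  refine ⟨fun k hk => (key k hk).2.1, fun k hk => ?_⟩
  obtain ⟨hp1, hl1, hle1⟩ := key (k + 1) (by omega)
  obtain ⟨hp2, _, _⟩ := key (k + 2) (by omega)
  rw [hθ k hk, hθ (k + 1) (by omega)]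
  have hg : (τ (k + 2) / lam) * (2 * γ - μ * τ (k + 2)) ≤
      (τ (k + 1) / lam) * (2 * γ - μ * τ (k + 1)) := by
    rw [div_mul_eq_mul_div, div_mul_eq_mul_div]
    gcongr (?_ / lam)
    nlinarith
  have hpos2 : 0 < 1 + (τ (k + 2) / lam) * (2 * γ - μ * τ (k + 2)) := by
    nlinarith [div_pos hp2 hlam]
  have hsq2 : 0 < Real.sqrt (1 + (τ (k + 2) / lam) * (2 * γ - μ * τ (k + 2))) :=
    Real.sqrt_pos.2 hpos2
  apply one_div_le_one_div_of_le hsq2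
  exact Real.sqrt_le_sqrt (by linarith)
end

section
/- Let B : G ⇒ G be monotone, c > 0, and let M₂ᵏ, M₂ᵏ⁻¹ : G → G be linear continuous self-adjoint positive semidefinite. Suppose yᵏ⁺¹ + M₂ᵏ(zᵏ − zᵏ⁺¹) ∈ B zᵏ⁺¹ and yᵏ + M₂ᵏ⁻¹(zᵏ⁻¹ − zᵏ) ∈ B zᵏ. Then ⟨zᵏ⁺¹ − zᵏ, yᵏ⁺¹ − yᵏ⟩ ≥ ‖zᵏ⁺¹ − zᵏ‖²_{M₂ᵏ} − ½‖zᵏ⁺¹ − zᵏ‖²_{M₂ᵏ⁻¹} − ½‖zᵏ − zᵏ⁻¹‖²_{M₂ᵏ⁻¹}. -/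
open RealInnerProductSpace

/-- Inequality obtained from the inclusions \eqref{C-var-z-equiv-equiv-equiv}
for consecutive iterates and the monotonicity of `B`. -/
theorem consecutive_iterates_inequality
    {G : Type*} [NormedAddCommGroup G] [InnerProductSpace ℝ G]
    (B : G → Set G)
    (hB : ∀ x y u v, u ∈ B x → v ∈ B y → 0 ≤ ⟪x - y, u - v⟫)
    (c : ℝ) (hc : 0 < c)
    (Mk Mk' : G →L[ℝ] G)
    (hMk_sa : ∀ x y : G, ⟪Mk x, y⟫ = ⟪x, Mk y⟫)
    (hMk_psd : ∀ x : G, 0 ≤ ⟪x, Mk x⟫)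
    (hMk'_sa : ∀ x y : G, ⟪Mk' x, y⟫ = ⟪x, Mk' y⟫)
    (hMk'_psd : ∀ x : G, 0 ≤ ⟪x, Mk' x⟫)
    (y1 y2 z0 z1 z2 : G)
    (h1 : y2 + Mk (z1 - z2) ∈ B z2)
    (h2 : y1 + Mk' (z0 - z1) ∈ B z1) :
    ⟪z2 - z1, Mk (z2 - z1)⟫ - (1 / 2) * ⟪z2 - z1, Mk' (z2 - z1)⟫
      - (1 / 2) * ⟪z1 - z0, Mk' (z1 - z0)⟫ ≤ ⟪z2 - z1, y2 - y1⟫ := by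
  have hmono := hB z2 z1 _ _ h1 h2
  have hpsd := hMk'_psd ((z2 - z1) + (z0 - z1))
  have e : ∀ a b : G, ⟪a, Mk' b⟫ = ⟪b, Mk' a⟫ := fun a b => by
    rw [← hMk'_sa, real_inner_comm]
  have eM : ∀ a b : G, ⟪a, Mk b⟫ = ⟪b, Mk a⟫ := fun a b => by
    rw [← hMk_sa, real_inner_comm]
  simp only [map_sub, map_add, map_neg, inner_sub_left, inner_sub_right, inner_add_left,
    inner_add_right, inner_neg_left, inner_neg_right] at hmono hpsd ⊢
  linarith [hmono, hpsd, e z2 z0, e z2 z1, e z0 z1, eM z2 z1]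
end

section
/- Let H be a real Hilbert space, S ⊆ H nonempty, α > 0 and (Wᵏ)_{k≥0} linear continuous self-adjoint operators with Wᵏ ≽ αId and Wᵏ ≽ Wᵏ⁺¹ for all k. If a sequence (xᵏ) satisfies ‖xᵏ⁺¹ − z‖_{Wᵏ⁺¹} ≤ ‖xᵏ − z‖_{Wᵏ} for all z ∈ S and all k, and every weak sequential cluster point of (xᵏ) belongs to S, then (xᵏ) converges weakly to an element of S. -/
open RealInnerProductSpace Filter Topology

section OpialAux

variable {H : Type*} [NormedAddCommGroup H] [InnerProductSpace ℝ H] [CompleteSpace H]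

/-- Cauchy–Schwarz for a positive semidefinite symmetric operator. -/
lemma opial_aux_cs (D : H →L[ℝ] H) (hsym : ∀ u v : H, ⟪D u, v⟫ = ⟪u, D v⟫)
    (hpos : ∀ u : H, 0 ≤ ⟪u, D u⟫) (u v : H) :
    ⟪u, D v⟫ ^ 2 ≤ ⟪u, D u⟫ * ⟪v, D v⟫ := by
  have key : ∀ t : ℝ, 0 ≤ ⟪v, D v⟫ * (t * t) + (2 * ⟪u, D v⟫) * t + ⟪u, D u⟫ := by
    intro t
    have h0 := hpos (u + t • v)
    have hs : ⟪v, D u⟫ = ⟪u, D v⟫ := by rw [real_inner_comm]; exact hsym u v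
    have expand : ⟪u + t • v, D (u + t • v)⟫
        = ⟪v, D v⟫ * (t * t) + (2 * ⟪u, D v⟫) * t + ⟪u, D u⟫ := by
      simp only [map_add, map_smul, inner_add_left, inner_add_right,
        real_inner_smul_left, real_inner_smul_right, hs]
      ring
    linarith [expand ▸ h0]
  have hd := discrim_le_zero key
  rw [discrim] at hd
  nlinarith [hd]

/-- Bounded sequences in a Hilbert space have weakly convergent subsequences. -/
lemma opial_aux_weak_compact (x : ℕ → H) (C : ℝ) (hb : ∀ k, ‖x k‖ ≤ C) :
    ∃ p : H, ∃ φ : ℕ → ℕ, StrictMono φ ∧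
      ∀ y : H, Tendsto (fun n => ⟪x (φ n), y⟫) atTop (𝓝 ⟪p, y⟫) := by
  have hC : 0 ≤ C := le_trans (norm_nonneg _) (hb 0)
  set s : Set (ℕ → ℝ) := Set.univ.pi (fun _ => Set.Icc (-(C^2)) (C^2)) with hs
  have hcs : IsCompact s := isCompact_univ_pi fun _ => isCompact_Icc
  have hmem : ∀ k, (fun j => ⟪x k, x j⟫) ∈ s := by
    intro k
    refine Set.mem_univ_pi.2 fun j => ?_
    rw [Set.mem_Icc, ← abs_le]
    refine (abs_real_inner_le_norm _ _).trans ?_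
    calc ‖x k‖ * ‖x j‖ ≤ C * C := mul_le_mul (hb k) (hb j) (norm_nonneg _) hC
    _ = C ^ 2 := (sq C).symm
  obtain ⟨g, -, φ, hφ, hconv⟩ := hcs.isSeqCompact hmem
  have hcoord : ∀ j, Tendsto (fun n => ⟪x (φ n), x j⟫) atTop (𝓝 (g j)) := by
    intro j
    exact (tendsto_pi_nhds.1 hconv) j
  set M := (Submodule.span ℝ (Set.range x)).topologicalClosure with hM
  have key : ∀ v ∈ Submodule.span ℝ (Set.range x),
      ∃ L, Tendsto (fun n => ⟪x (φ n), v⟫) atTop (𝓝 L) := by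
    intro v hv
    induction hv using Submodule.span_induction with
    | mem v hv => obtain ⟨j, rfl⟩ := hv; exact ⟨g j, hcoord j⟩
    | zero => exact ⟨0, by simp⟩
    | add u v _ _ hu hv =>
        obtain ⟨L1, h1⟩ := hu; obtain ⟨L2, h2⟩ := hv
        exact ⟨L1 + L2, by simpa [inner_add_right] using h1.add h2⟩
    | smul c v _ hv =>
        obtain ⟨L, h⟩ := hv
        exact ⟨c * L, by simpa [real_inner_smul_right] using h.const_mul c⟩
  have keyM : ∀ v ∈ M, CauchySeq (fun n => ⟪x (φ n), v⟫) := by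
    intro v hv
    rw [Metric.cauchySeq_iff]
    intro ε hε
    have hdense : v ∈ closure ((Submodule.span ℝ (Set.range x) : Submodule ℝ H) : Set H) := by
      rwa [← Submodule.topologicalClosure_coe]
    obtain ⟨v', hv'span, hv'near⟩ :=
      Metric.mem_closure_iff.1 hdense (ε / (3 * (C + 1))) (by positivity)
    obtain ⟨L, hL⟩ := key v' hv'span
    obtain ⟨N, hN⟩ := Metric.cauchySeq_iff.1 hL.cauchySeq (ε / 3) (by positivity)
    refine ⟨N, fun m hm n hn => ?_⟩
    have est : ∀ k, |⟪x (φ k), v⟫ - ⟪x (φ k), v'⟫| < ε / 3 := by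
      intro k
      rw [← inner_sub_right]
      have h1 : |⟪x (φ k), v - v'⟫| ≤ C * ‖v - v'‖ :=
        (abs_real_inner_le_norm _ _).trans (mul_le_mul_of_nonneg_right (hb _) (norm_nonneg _))
      have h2 : ‖v - v'‖ < ε / (3 * (C + 1)) := by rw [← dist_eq_norm]; exact hv'near
      have hD : (0:ℝ) < 3 * (C + 1) := by positivity
      have h3 : C * (ε / (3 * (C + 1))) < ε / 3 := by
        rw [mul_div_assoc', div_lt_div_iff₀ hD (by norm_num)]
        nlinarith
      have h4 : C * ‖v - v'‖ ≤ C * (ε / (3 * (C + 1))) :=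
        mul_le_mul_of_nonneg_left h2.le hC
      linarith
    have h2 := hN m hm n hn
    rw [Real.dist_eq] at h2 ⊢
    have e1 := est m; have e2 := est n
    calc |⟪x (φ m), v⟫ - ⟪x (φ n), v⟫|
        ≤ |⟪x (φ m), v⟫ - ⟪x (φ m), v'⟫| + |⟪x (φ m), v'⟫ - ⟪x (φ n), v'⟫|
          + |⟪x (φ n), v'⟫ - ⟪x (φ n), v⟫| := by
          have := abs_sub_le (⟪x (φ m), v⟫) (⟪x (φ m), v'⟫) (⟪x (φ n), v⟫)
          have h3 := abs_sub_le (⟪x (φ m), v'⟫) (⟪x (φ n), v'⟫) (⟪x (φ n), v⟫)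
          linarith
    _ < ε := by rw [abs_sub_comm (⟪x (φ n), v'⟫)] at *; linarith
  haveI : CompleteSpace M := (Submodule.isClosed_topologicalClosure _).completeSpace_coe
  have hxM : ∀ k, x k ∈ M :=
    fun k => Submodule.le_topologicalClosure _ (Submodule.subset_span ⟨k, rfl⟩)
  have cauchyAll : ∀ y : H, ∃ L, Tendsto (fun n => ⟪x (φ n), y⟫) atTop (𝓝 L) := by
    intro y
    set P : H := (M.starProjection y : H) with hP
    have heq : ∀ k, ⟪x k, y⟫ = ⟪x k, P⟫ := by
      intro k
      have horth := Submodule.sub_starProjection_mem_orthogonal (K := M) y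
      have h0 : ⟪x k, y - P⟫ = 0 := (Submodule.mem_orthogonal M _).1 horth (x k) (hxM k)
      rw [inner_sub_right] at h0; linarith
    obtain ⟨L, hL⟩ := cauchySeq_tendsto_of_complete
      (keyM P (M.starProjection_apply_mem y))
    exact ⟨L, by simpa only [heq] using hL⟩
  choose L hL using cauchyAll
  have Lbound : ∀ y, ‖L y‖ ≤ C * ‖y‖ := by
    intro y
    rw [Real.norm_eq_abs]
    refine le_of_tendsto (hL y).abs (Eventually.of_forall fun n => ?_)
    exact (abs_real_inner_le_norm _ _).trans
      (mul_le_mul_of_nonneg_right (hb _) (norm_nonneg _))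
  let ℓ : H →ₗ[ℝ] ℝ :=
    { toFun := L
      map_add' := fun u v => tendsto_nhds_unique (hL (u + v))
        (by simpa [inner_add_right] using (hL u).add (hL v))
      map_smul' := fun c v => tendsto_nhds_unique (hL (c • v))
        (by simpa [real_inner_smul_right] using (hL v).const_mul c) }
  let ℓc : H →L[ℝ] ℝ := ℓ.mkContinuous C Lbound
  refine ⟨(InnerProductSpace.toDual ℝ H).symm ℓc, φ, hφ, fun y => ?_⟩
  rw [InnerProductSpace.toDual_symm_apply]
  exact hL y

end OpialAux

/-- Variable metric Opial lemma: if `(Wᵏ)` is a nonincreasing sequence of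
uniformly strongly positive self-adjoint operators, `(xᵏ)` is Fejér monotone
w.r.t. `S` in the variable metrics, and every weak sequential cluster point of
`(xᵏ)` lies in `S`, then `(xᵏ)` converges weakly to a point of `S`. -/
theorem opial_variable_metric
    {H : Type*} [NormedAddCommGroup H] [InnerProductSpace ℝ H] [CompleteSpace H]
    (S : Set H) (hS : S.Nonempty) (α : ℝ) (hα : 0 < α)
    (W : ℕ → H →L[ℝ] H)
    (hW_sa : ∀ k, ∀ x y : H, ⟪W k x, y⟫ = ⟪x, W k y⟫)
    (hW_pos : ∀ k, ∀ x : H, α * ‖x‖ ^ 2 ≤ ⟪x, W k x⟫)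
    (hW_mono : ∀ k, ∀ x : H, ⟪x, W (k + 1) x⟫ ≤ ⟪x, W k x⟫)
    (x : ℕ → H)
    (hfejer : ∀ z ∈ S, ∀ k : ℕ,
      ⟪x (k + 1) - z, W (k + 1) (x (k + 1) - z)⟫ ≤ ⟪x k - z, W k (x k - z)⟫)
    (hcluster : ∀ p : H, (∃ φ : ℕ → ℕ, StrictMono φ ∧
        ∀ y : H, Tendsto (fun n => ⟪x (φ n), y⟫) atTop (𝓝 ⟪p, y⟫)) → p ∈ S) :
    ∃ p ∈ S, ∀ y : H, Tendsto (fun k => ⟪x k, y⟫) atTop (𝓝 ⟪p, y⟫) := by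
  classical
  obtain ⟨z₀, hz₀⟩ := hS
  -- basic monotonicity and positivity facts
  have hq_anti : ∀ y : H, Antitone (fun k => ⟪y, W k y⟫) :=
    fun y => antitone_nat_of_succ_le fun k => hW_mono k y
  have hq_nonneg : ∀ (k : ℕ) (y : H), 0 ≤ ⟪y, W k y⟫ :=
    fun k y => le_trans (by positivity) (hW_pos k y)
  have hf_anti : ∀ z ∈ S, Antitone (fun k => ⟪x k - z, W k (x k - z)⟫) :=
    fun z hz => antitone_nat_of_succ_le (fun k => hfejer z hz k)
  -- boundedness of the sequence
  set F : ℝ := ⟪x 0 - z₀, W 0 (x 0 - z₀)⟫ with hF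
  set C : ℝ := ‖z₀‖ + Real.sqrt (F / α) with hCdef
  have hxbound : ∀ k, ‖x k‖ ≤ C := by
    intro k
    have h1 : α * ‖x k - z₀‖ ^ 2 ≤ F :=
      (hW_pos k _).trans (hf_anti z₀ hz₀ (Nat.zero_le k))
    have h2 : ‖x k - z₀‖ ^ 2 ≤ F / α := by
      rw [le_div_iff₀ hα]; linarith [h1, mul_comm α (‖x k - z₀‖ ^ 2)]
    have h3 : ‖x k - z₀‖ ≤ Real.sqrt (F / α) := by
      rw [← Real.sqrt_sq (norm_nonneg (x k - z₀))]
      exact Real.sqrt_le_sqrt h2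
    calc ‖x k‖ = ‖z₀ + (x k - z₀)‖ := by rw [add_sub_cancel]
    _ ≤ ‖z₀‖ + ‖x k - z₀‖ := norm_add_le _ _
    _ ≤ C := by rw [hCdef]; linarith
  set B : ℝ := ‖W 0‖ with hBdef
  have hB : 0 ≤ B := norm_nonneg _
  -- quadratic forms converge, hence W k y converges strongly
  have hq_conv : ∀ y : H, ∃ Q, Tendsto (fun k => ⟪y, W k y⟫) atTop (𝓝 Q) := by
    intro y
    exact ⟨_, tendsto_atTop_ciInf (hq_anti y)
      ⟨0, by rintro a ⟨k, rfl⟩; exact hq_nonneg k y⟩⟩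
  have hWcauchy : ∀ y : H, ∃ w : H, Tendsto (fun k => W k y) atTop (𝓝 w) := by
    intro y
    refine cauchySeq_tendsto_of_complete ?_
    rw [Metric.cauchySeq_iff]
    intro ε hε
    obtain ⟨Q, hQ⟩ := hq_conv y
    obtain ⟨N, hN⟩ := Metric.cauchySeq_iff.1 hQ.cauchySeq (ε ^ 2 / (B + 1)) (by positivity)
    have key : ∀ m k, m ≤ k → N ≤ m → N ≤ k → dist (W m y) (W k y) < ε := by
      intro m k hmk hm hk
      set D : H →L[ℝ] H := W m - W k with hDdef
      have hDsym : ∀ u v : H, ⟪D u, v⟫ = ⟪u, D v⟫ := by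
        intro u v
        simp only [hDdef, ContinuousLinearMap.sub_apply, inner_sub_left, inner_sub_right,
          hW_sa m u v, hW_sa k u v]
      have hDpos : ∀ u : H, 0 ≤ ⟪u, D u⟫ := by
        intro u
        simp only [hDdef, ContinuousLinearMap.sub_apply, inner_sub_right]
        have := hq_anti u hmk
        simpa using sub_nonneg.2 this
      have hDub : ∀ u : H, ⟪u, D u⟫ ≤ B * ‖u‖ ^ 2 := by
        intro u
        have h1 : ⟪u, D u⟫ ≤ ⟪u, W m u⟫ := by
          simp only [hDdef, ContinuousLinearMap.sub_apply, inner_sub_right]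
          linarith [hq_nonneg k u]
        have h2 : ⟪u, W m u⟫ ≤ ⟪u, W 0 u⟫ := hq_anti u (Nat.zero_le m)
        have h3 : ⟪u, W 0 u⟫ ≤ ‖u‖ * ‖W 0 u‖ := real_inner_le_norm _ _
        have h4 : ‖W 0 u‖ ≤ B * ‖u‖ := (W 0).le_opNorm u
        nlinarith [norm_nonneg u]
      have hcs := opial_aux_cs D hDsym hDpos (D y) y
      have hDD : ⟪D y, D y⟫ = ‖D y‖ ^ 2 := real_inner_self_eq_norm_sq (D y)
      have hub := hDub (D y)
      have hyD : ⟪y, D y⟫ < ε ^ 2 / (B + 1) := by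
        have := hN m hm k hk
        rw [Real.dist_eq] at this
        have habs := le_abs_self (⟪y, W m y⟫ - ⟪y, W k y⟫)
        simp only [hDdef, ContinuousLinearMap.sub_apply, inner_sub_right]
        linarith
      have hyD0 : 0 ≤ ⟪y, D y⟫ := hDpos y
      have ha : 0 ≤ ‖D y‖ ^ 2 := sq_nonneg _
      have hfinal : ‖D y‖ ^ 2 < ε ^ 2 := by
        rcases ha.eq_or_lt with h0 | h0
        · rw [← h0]; positivity
        · have h5 : ‖D y‖ ^ 2 ≤ B * ⟪y, D y⟫ := by nlinarith [hcs, hDD]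
          have h6 : B * ⟪y, D y⟫ ≤ B * (ε ^ 2 / (B + 1)) :=
            mul_le_mul_of_nonneg_left hyD.le hB
          have h7 : B * (ε ^ 2 / (B + 1)) < ε ^ 2 := by
            rw [mul_div_assoc', div_lt_iff₀ (by positivity)]
            nlinarith
          linarith
      have hD' : dist (W m y) (W k y) = ‖D y‖ := by
        rw [dist_eq_norm]; simp [hDdef]
      rw [hD']
      exact lt_of_pow_lt_pow_left₀ 2 hε.le hfinal
    refine ⟨N, fun m hm k hk => ?_⟩
    rcases le_total m k with h | h
    · exact key m k h hm hk
    · rw [dist_comm]; exact key k m h hk hm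
  choose Wl hWl using hWcauchy
  have hWl_inner : ∀ u v : H, Tendsto (fun k => ⟪u, W k v⟫) atTop (𝓝 ⟪u, Wl v⟫) :=
    fun u v => tendsto_const_nhds.inner (hWl v)
  -- convergence of mixed terms along weakly convergent subsequences
  have hWx : ∀ (ψ : ℕ → ℕ) (p : H), Tendsto ψ atTop atTop →
      (∀ y : H, Tendsto (fun n => ⟪x (ψ n), y⟫) atTop (𝓝 ⟪p, y⟫)) →
      ∀ v : H, Tendsto (fun n => ⟪x (ψ n), W (ψ n) v⟫) atTop (𝓝 ⟪p, Wl v⟫) := by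
    intro ψ p hψ hw v
    have h0 : Tendsto (fun n => ⟪x (ψ n), W (ψ n) v - Wl v⟫) atTop (𝓝 0) := by
      have hn0 : Tendsto (fun n => C * ‖W (ψ n) v - Wl v‖) atTop (𝓝 0) := by
        have h1 : Tendsto (fun n => W (ψ n) v - Wl v) atTop (𝓝 0) := by
          have h2 := ((hWl v).comp hψ).sub (tendsto_const_nhds (α := ℕ) (x := Wl v))
          simpa [Function.comp] using h2
        simpa using (h1.norm.const_mul C)
      refine squeeze_zero_norm (fun n => ?_) hn0
      exact (abs_real_inner_le_norm _ _).trans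
        (mul_le_mul_of_nonneg_right (hxbound _) (norm_nonneg _))
    have h1 := (hw (Wl v)).add h0
    rw [add_zero] at h1
    have heq : (fun n => ⟪x (ψ n), Wl v⟫ + ⟪x (ψ n), W (ψ n) v - Wl v⟫)
        = fun n => ⟪x (ψ n), W (ψ n) v⟫ := by
      funext n; rw [inner_sub_right]; ring
    rwa [heq] at h1
  -- limits of the Fejér quantities
  have hf_lim : ∀ z ∈ S, ∃ L, Tendsto (fun k => ⟪x k - z, W k (x k - z)⟫) atTop (𝓝 L) :=
    fun z hz => ⟨_, tendsto_atTop_ciInf (hf_anti z hz)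
      ⟨0, by rintro a ⟨k, rfl⟩; exact hq_nonneg k (x k - z)⟩⟩
  -- expansion identity
  have expand : ∀ (z : H) (k : ℕ), ⟪x k - z, W k (x k - z)⟫
      = ⟪x k, W k (x k)⟫ - 2 * ⟪x k, W k z⟫ + ⟪z, W k z⟫ := by
    intro z k
    have hsymm : ⟪z, W k (x k)⟫ = ⟪x k, W k z⟫ := by
      rw [real_inner_comm]; exact hW_sa k (x k) z
    rw [map_sub, inner_sub_left, inner_sub_right, inner_sub_right, hsymm]
    ring
  -- uniqueness of weak cluster points in S
  have uniq : ∀ p q : H, p ∈ S → q ∈ S →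
      (∃ φ : ℕ → ℕ, StrictMono φ ∧
        ∀ y : H, Tendsto (fun n => ⟪x (φ n), y⟫) atTop (𝓝 ⟪p, y⟫)) →
      (∃ ψ : ℕ → ℕ, StrictMono ψ ∧
        ∀ y : H, Tendsto (fun n => ⟪x (ψ n), y⟫) atTop (𝓝 ⟪q, y⟫)) → p = q := by
    rintro p q hp hq ⟨φ, hφ, hφw⟩ ⟨ψ, hψ, hψw⟩
    obtain ⟨Lp, hLp⟩ := hf_lim p hp
    obtain ⟨Lq, hLq⟩ := hf_lim q hq
    -- the difference sequence
    have hdiff : ∀ k, ⟪x k - p, W k (x k - p)⟫ - ⟪x k - q, W k (x k - q)⟫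
        = -2 * ⟪x k, W k p⟫ + 2 * ⟪x k, W k q⟫ + ⟪p, W k p⟫ - ⟪q, W k q⟫ := by
      intro k; rw [expand p k, expand q k]; ring
    have lim_along : ∀ (θ : ℕ → ℕ) (r : H), StrictMono θ →
        (∀ y : H, Tendsto (fun n => ⟪x (θ n), y⟫) atTop (𝓝 ⟪r, y⟫)) →
        Tendsto (fun n => ⟪x (θ n) - p, W (θ n) (x (θ n) - p)⟫
          - ⟪x (θ n) - q, W (θ n) (x (θ n) - q)⟫) atTop
          (𝓝 (-2 * ⟪r, Wl p⟫ + 2 * ⟪r, Wl q⟫ + ⟪p, Wl p⟫ - ⟪q, Wl q⟫)) := by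
      intro θ r hθ hw
      have hT := hθ.tendsto_atTop
      have t1 := (hWx θ r hT hw p).const_mul (-2)
      have t2 := (hWx θ r hT hw q).const_mul 2
      have t3 := (hWl_inner p p).comp hT
      have t4 := (hWl_inner q q).comp hT
      have := ((t1.add t2).add t3).sub t4
      have heq : (fun n => -2 * ⟪x (θ n), W (θ n) p⟫ + 2 * ⟪x (θ n), W (θ n) q⟫
          + ⟪p, W (θ n) p⟫ - ⟪q, W (θ n) q⟫)
          = fun n => ⟪x (θ n) - p, W (θ n) (x (θ n) - p)⟫
            - ⟪x (θ n) - q, W (θ n) (x (θ n) - q)⟫ := by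
        funext n; rw [hdiff]
      rw [← heq]
      convert this using 2 <;> simp [Function.comp]
    have limφ := lim_along φ p hφ hφw
    have limψ := lim_along ψ q hψ hψw
    have limφ' : Tendsto (fun n => ⟪x (φ n) - p, W (φ n) (x (φ n) - p)⟫
        - ⟪x (φ n) - q, W (φ n) (x (φ n) - q)⟫) atTop (𝓝 (Lp - Lq)) :=
      (hLp.comp hφ.tendsto_atTop).sub (hLq.comp hφ.tendsto_atTop)
    have limψ' : Tendsto (fun n => ⟪x (ψ n) - p, W (ψ n) (x (ψ n) - p)⟫
        - ⟪x (ψ n) - q, W (ψ n) (x (ψ n) - q)⟫) atTop (𝓝 (Lp - Lq)) :=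
      (hLp.comp hψ.tendsto_atTop).sub (hLq.comp hψ.tendsto_atTop)
    have e1 := tendsto_nhds_unique limφ limφ'
    have e2 := tendsto_nhds_unique limψ limψ'
    -- conclude ⟪p - q, Wl p - Wl q⟫ = 0
    have e3 : ⟪p - q, Wl p⟫ - ⟪p - q, Wl q⟫ = 0 := by
      rw [inner_sub_left, inner_sub_left]
      linarith
    -- positivity of the limit form
    have e4 : α * ‖p - q‖ ^ 2 ≤ ⟪p - q, Wl p⟫ - ⟪p - q, Wl q⟫ := by
      have hlim : Tendsto (fun k => ⟪p - q, W k p⟫ - ⟪p - q, W k q⟫) atTop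
          (𝓝 (⟪p - q, Wl p⟫ - ⟪p - q, Wl q⟫)) :=
        (hWl_inner (p - q) p).sub (hWl_inner (p - q) q)
      refine ge_of_tendsto hlim (Eventually.of_forall fun k => ?_)
      have := hW_pos k (p - q)
      rw [map_sub, inner_sub_right] at this
      linarith
    have e5 : ‖p - q‖ ^ 2 ≤ 0 := by
      by_contra hcon
      push_neg at hcon
      nlinarith
    have : ‖p - q‖ = 0 := by nlinarith [sq_nonneg ‖p - q‖, norm_nonneg (p - q)]
    rw [norm_eq_zero, sub_eq_zero] at this
    exact this
  -- extract a weak cluster point and show full weak convergence to it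
  obtain ⟨p0, φ0, hφ0, hφ0w⟩ := opial_aux_weak_compact x C hxbound
  have hp0 : p0 ∈ S := hcluster p0 ⟨φ0, hφ0, hφ0w⟩
  refine ⟨p0, hp0, fun y => ?_⟩
  refine tendsto_of_subseq_tendsto fun ns hns => ?_
  obtain ⟨θ, hθ, hθns⟩ := strictMono_subseq_of_tendsto_atTop hns
  obtain ⟨q, ψ, hψ, hψw⟩ :=
    opial_aux_weak_compact (fun n => x (ns (θ n))) C (fun n => hxbound _)
  have hstrict : StrictMono (fun n => ns (θ (ψ n))) := fun a b hab => hθns (hψ hab)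
  have hqw : ∀ y : H, Tendsto (fun n => ⟪x (ns (θ (ψ n))), y⟫) atTop (𝓝 ⟪q, y⟫) :=
    fun y => hψw y
  have hqS : q ∈ S := hcluster q ⟨fun n => ns (θ (ψ n)), hstrict, hqw⟩
  have hqp : q = p0 := uniq q p0 hqS hp0 ⟨fun n => ns (θ (ψ n)), hstrict, hqw⟩ ⟨φ0, hφ0, hφ0w⟩
  refine ⟨fun n => θ (ψ n), ?_⟩
  have := hqw y
  rwa [hqp] at this
end

section
/- Let H be a real Hilbert space, A : H ⇒ H and C : H → H with A + C γ-strongly monotone for γ > 0, C μ-Lipschitz, and let (x̄, v̄) satisfy −L*v̄ ∈ Ax̄ + Cx̄ where L : H → G is linear continuous. Suppose x, x⁺ ∈ H, y ∈ G, λ > 0, τ > 0 satisfy (λ/τ)(x − x⁺) − L*y + Cx⁺ − Cx ∈ (A + C)x⁺. Then (λ/(2τ))‖x − x̄‖² ≥ (λ/(2τ) + γ − μτ/2)‖x⁺ − x̄‖² + ((λ − μ)/(2τ))‖x⁺ − x‖² + ⟨y − v̄, Lx⁺ − Lx̄⟩. -/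
open RealInnerProductSpace

/-- Inequality \eqref{ineqx-2}: combining the `γ`-strong monotonicity of
`A + C` with the `μ`-Lipschitz continuity of `C`. -/
theorem strong_monotonicity_estimate
    {H G : Type*} [NormedAddCommGroup H] [InnerProductSpace ℝ H] [CompleteSpace H]
    [NormedAddCommGroup G] [InnerProductSpace ℝ G] [CompleteSpace G]
    (A : H → Set H) (C : H → H) (L : H →L[ℝ] G)
    (γ μ : ℝ) (hγ : 0 < γ) (hμ : 0 ≤ μ)
    (hsm : ∀ a b : H, ∀ p q : H,
      (∃ u ∈ A a, p = u + C a) → (∃ w ∈ A b, q = w + C b) →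
      γ * ‖a - b‖ ^ 2 ≤ ⟪a - b, p - q⟫)
    (hlip : ∀ a b : H, ‖C a - C b‖ ≤ μ * ‖a - b‖)
    (xbar : H) (vbar : G)
    (hpd : ∃ u ∈ A xbar, -((ContinuousLinearMap.adjoint L) vbar) = u + C xbar)
    (x xp : H) (y : G) (lam τ : ℝ) (hlam : 0 < lam) (hτ : 0 < τ)
    (hincl : ∃ u ∈ A xp,
      (lam / τ) • (x - xp) - (ContinuousLinearMap.adjoint L) y + C xp - C x
        = u + C xp) :
    (lam / (2 * τ) + γ - μ * τ / 2) * ‖xp - xbar‖ ^ 2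
      + ((lam - μ) / (2 * τ)) * ‖xp - x‖ ^ 2
      + ⟪y - vbar, L xp - L xbar⟫
    ≤ (lam / (2 * τ)) * ‖x - xbar‖ ^ 2 := by
  have hmono := hsm xp xbar _ _ hincl hpd
  have hadj : ∀ v : G, ⟪xp - xbar, (ContinuousLinearMap.adjoint L) v⟫ = ⟪v, L xp - L xbar⟫ := by
    intro v
    rw [real_inner_comm, ContinuousLinearMap.adjoint_inner_left, map_sub]
  have hexp : ⟪xp - xbar, ((lam / τ) • (x - xp) - (ContinuousLinearMap.adjoint L) y + C xp - C x)
      - (-((ContinuousLinearMap.adjoint L) vbar))⟫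
      = (lam / τ) * ⟪xp - xbar, x - xp⟫ - ⟪y - vbar, L xp - L xbar⟫
        + ⟪xp - xbar, C xp - C x⟫ := by
    simp only [inner_sub_right, inner_add_right, inner_neg_right, real_inner_smul_right,
      inner_sub_left, hadj]
    ring
  rw [hexp] at hmono
  have hpol : ‖x - xbar‖ ^ 2 = ‖xp - xbar‖ ^ 2 + 2 * ⟪xp - xbar, x - xp⟫ + ‖x - xp‖ ^ 2 := by
    have h := norm_add_sq_real (xp - xbar) (x - xp)
    rw [show xp - xbar + (x - xp) = x - xbar by abel] at h
    linarith
  have hcs : ⟪xp - xbar, C xp - C x⟫ ≤ μ * (‖xp - xbar‖ * ‖xp - x‖) := by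
    calc ⟪xp - xbar, C xp - C x⟫ ≤ ‖xp - xbar‖ * ‖C xp - C x‖ := real_inner_le_norm _ _
      _ ≤ ‖xp - xbar‖ * (μ * ‖xp - x‖) :=
        mul_le_mul_of_nonneg_left (hlip xp x) (norm_nonneg _)
      _ = μ * (‖xp - xbar‖ * ‖xp - x‖) := by ring
  have hrev : ‖x - xp‖ = ‖xp - x‖ := norm_sub_rev _ _
  rw [hrev] at hpol
  set a := ‖xp - xbar‖ with ha
  set b := ‖xp - x‖ with hb
  set c := ‖x - xbar‖ with hc
  set I := ⟪y - vbar, L xp - L xbar⟫ with hI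
  have hτ' : τ ≠ 0 := ne_of_gt hτ
  rw [← mul_le_mul_iff_right₀ (show (0:ℝ) < 2 * τ by linarith)]
  have key : 2 * τ * (γ * a ^ 2) ≤ lam * (2 * ⟪xp - xbar, x - xp⟫) - 2 * τ * I
      + 2 * τ * ⟪xp - xbar, C xp - C x⟫ := by
    have h1 : 2 * τ * ((lam / τ) * ⟪xp - xbar, x - xp⟫) = lam * (2 * ⟪xp - xbar, x - xp⟫) := by
      field_simp; try ring
    nlinarith [mul_le_mul_of_nonneg_left hmono (show (0:ℝ) ≤ 2 * τ by linarith)]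
  have hamgm : 2 * τ * (μ * (a * b)) ≤ μ * τ ^ 2 * a ^ 2 + μ * b ^ 2 := by
    nlinarith [sq_nonneg (τ * a - b), mul_nonneg hμ (sq_nonneg (τ * a - b))]
  have hgoal : 2 * τ * ((lam / (2 * τ) + γ - μ * τ / 2) * a ^ 2 + ((lam - μ) / (2 * τ)) * b ^ 2 + I)
      = lam * a ^ 2 + 2 * τ * γ * a ^ 2 - μ * τ ^ 2 * a ^ 2 + (lam - μ) * b ^ 2 + 2 * τ * I := by
    field_simp; try ring
  have hgoal2 : 2 * τ * ((lam / (2 * τ)) * c ^ 2) = lam * c ^ 2 := by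
    field_simp; try ring
  rw [hgoal, hgoal2]
  have hcs2 : 2 * τ * ⟪xp - xbar, C xp - C x⟫ ≤ 2 * τ * (μ * (a * b)) :=
    mul_le_mul_of_nonneg_left hcs (by linarith)
  nlinarith [hpol, key, hamgm, hcs2]
end
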